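/- Suppose p1 > 0 and p2 - p1^2 > 0. If real numbers a0, a1 satisfy 4*p1^2*a0 + p1^2*a1^2 - 2*p1*p2*a0*a1 - 2*p1*a1 - 2*p2*a0 + p2^2*a0^2 + 1 < 0, then a0 > 0 and a1 > 0. -/
import Mathlib

theorem stmt_3 (a0 a1 p1 p2 : ℝ) (hp1 : p1 > 0) (hp : p2 - p1^2 > 0)
    (h : 4*p1^2*a0 + p1^2*a1^2 - 2*p1*p2*a0*a1 - 2*p1*a1 - 2*p2*a0 + p2^2*a0^2 + 1 < 0) :
    a0 > 0 ∧ a1 > 0 := by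
  have ha0 : a0 > 0 := by nlinarith [sq_nonneg (p1*a1 - p2*a0 - 1)]
  refine ⟨ha0, ?_⟩
  by_contra hn
  push_neg at hn
  nlinarith [sq_nonneg (p2*a0 + p1*a1 - 1), mul_pos hp1 ha0, sq_nonneg p1, mul_nonneg (mul_pos hp1 ha0).le (neg_nonneg.mpr hn)]
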